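/- arXiv:2003.12572 — 6 statements merged into one kernel-verified Lean document; each statement's English description precedes it below -/
import Mathlib

section
/- For all integers p, q ≥ 0, the Delannoy number D(p,q) satisfies D(p,q) = ((-1)^q / q!) · det W, where W is the (q+1)×(q+1) matrix whose first column has entries W_{i,1} = ⟨p⟩_{i-1} for 1 ≤ i ≤ q+1, and whose remaining entries are W_{i,j} = (-1)^{i-j} · C(i-1, j-1) · ⟨p+1⟩_{i-j} for 1 ≤ i ≤ q+1 and 2 ≤ j ≤ q+1 (with the convention that the binomial coefficient C(m,k) and the falling factorial ⟨z⟩_k vanish when the index i-j is negative, i.e. entries above the superdiagonal beyond one step are 0). -/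
/-- The Delannoy numbers: `D(p,q) = ∑_{i=0}^{p} C(p,i) C(q,i) 2^i`. -/
def delannoy (p q : ℕ) : ℕ :=
  ∑ i ∈ Finset.range (p + 1), p.choose i * q.choose i * 2 ^ i

/-- The `(q+1) × (q+1)` matrix `W(p,q)` (indexed from 0): the first column has entries
`⟨p⟩_i`, and for columns `j ≥ 1` the entry in row `i` is
`(-1)^{i+1-j} · C(i, j-1) · ⟨p+1⟩_{i+1-j}`, with entries above the superdiagonal
(i.e. with `j > i + 1`) being `0` since the binomial coefficient vanishes there. -/
def delannoyMatrix (p q : ℕ) : Matrix (Fin (q + 1)) (Fin (q + 1)) ℚ :=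
  Matrix.of fun i j =>
    if (j : ℕ) = 0 then (p.descFactorial (i : ℕ) : ℚ)
    else (-1 : ℚ) ^ ((i : ℕ) + 1 - (j : ℕ)) * (Nat.choose (i : ℕ) ((j : ℕ) - 1)) *
      ((p + 1).descFactorial ((i : ℕ) + 1 - (j : ℕ)) : ℚ)


open Finset

/-- `∑_{m=0}^{i} (-1)^m C(a+1,m) C(i-m,r) = (-1)^{i-r} C(a-r, i-r)` for `r ≤ a`, `r ≤ i`. -/
lemma G (a : ℕ) : ∀ i r : ℕ, r ≤ a → r ≤ i →
    ∑ m ∈ range (i+1), (-1:ℚ)^m * ((a+1).choose m) * ((i-m).choose r)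
      = (-1:ℚ)^(i-r) * ((a-r).choose (i-r)) := by
  intro i
  induction i with
  | zero =>
    intro r hra hri
    interval_cases r
    simp
  | succ i ih =>
    intro r hra hri
    rw [Finset.sum_range_succ]
    match r with
    | 0 =>
      -- all C(i+1-m, 0) = 1
      have h1 : ∑ m ∈ range (i+1), (-1:ℚ)^m * ((a+1).choose m) * ((i+1-m).choose 0)
          = ∑ m ∈ range (i+1), (-1:ℚ)^m * ((a+1).choose m) * ((i-m).choose 0) := by
        apply Finset.sum_congr rfl; intro m hm; simp
      rw [h1, ih 0 (Nat.zero_le _) (Nat.zero_le _)]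
      simp only [Nat.sub_zero, Nat.choose_zero_right, Nat.cast_one, mul_one]
      have pas : (a+1).choose (i+1) = a.choose i + a.choose (i+1) := Nat.choose_succ_succ a i
      rw [pas]
      push_cast
      ring
    | s + 1 =>
      -- last term vanishes: C(0, s+1) = 0
      have hz : ((i+1-(i+1)).choose (s+1) : ℚ) = 0 := by simp
      rw [hz, mul_zero, add_zero]
      have h1 : ∑ m ∈ range (i+1), (-1:ℚ)^m * ((a+1).choose m) * ((i+1-m).choose (s+1))
          = (∑ m ∈ range (i+1), (-1:ℚ)^m * ((a+1).choose m) * ((i-m).choose s))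
            + ∑ m ∈ range (i+1), (-1:ℚ)^m * ((a+1).choose m) * ((i-m).choose (s+1)) := by
        rw [← Finset.sum_add_distrib]
        apply Finset.sum_congr rfl
        intro m hm
        have hmi : m ≤ i := Nat.lt_succ_iff.mp (Finset.mem_range.mp hm)
        have : i + 1 - m = (i - m) + 1 := by omega
        rw [this, Nat.choose_succ_succ]
        push_cast; ring
      rw [h1]
      have hs : s ≤ a := by omega
      have hsi : s ≤ i := by omega
      rw [ih s hs hsi]
      rcases Nat.lt_or_ge i (s+1) with hcase | hcase
      · -- i < s+1, so i = s; second sum is 0 termwise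
        have hie : i = s := by omega
        subst hie
        have h2 : ∑ m ∈ range (i+1), (-1:ℚ)^m * ((a+1).choose m) * ((i-m).choose (i+1)) = 0 := by
          apply Finset.sum_eq_zero; intro m hm
          have : (i-m).choose (i+1) = 0 := Nat.choose_eq_zero_of_lt (by omega)
          rw [this]; push_cast; ring
        rw [h2, add_zero]
        simp
      · -- s+1 ≤ i
        rw [ih (s+1) hra hcase]
        obtain ⟨c, hc⟩ : ∃ c, i - s = c + 1 := ⟨i - s - 1, by omega⟩
        obtain ⟨d, hd⟩ : ∃ d, a - s = d + 1 := ⟨a - s - 1, by omega⟩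
        have e3 : i - (s+1) = c := by omega
        have e4 : a - (s+1) = d := by omega
        have e5 : i + 1 - (s+1) = c + 1 := by omega
        rw [e3, e4, e5, hc, hd, Nat.choose_succ_succ]
        push_cast
        ring


lemma key (p i : ℕ) :
    ∑ m ∈ range (i+1), (-1:ℚ)^m * ((p+1).choose m) * (delannoy p (i-m)) = p.choose i := by
  have expand : ∑ m ∈ range (i+1), (-1:ℚ)^m * ((p+1).choose m) * (delannoy p (i-m))
      = ∑ r ∈ range (p+1), (p.choose r : ℚ) * 2^r *
          ∑ m ∈ range (i+1), (-1:ℚ)^m * ((p+1).choose m) * ((i-m).choose r) := by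
    unfold delannoy
    push_cast
    simp_rw [Finset.mul_sum]
    rw [Finset.sum_comm]
    refine Finset.sum_congr rfl fun r _ => Finset.sum_congr rfl fun m _ => by ring
  rw [expand]
  rcases Nat.lt_or_ge p i with hip | hip
  · -- i > p : everything vanishes
    have hz : ((p.choose i : ℕ) : ℚ) = 0 := by
      rw [Nat.choose_eq_zero_of_lt hip]; simp
    rw [hz]
    apply Finset.sum_eq_zero
    intro r hr
    have hrp : r ≤ p := Nat.lt_succ_iff.mp (Finset.mem_range.mp hr)
    rw [G p i r hrp (by omega)]
    have : (p - r).choose (i - r) = 0 := Nat.choose_eq_zero_of_lt (by omega)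
    rw [this]
    push_cast; ring
  · -- i ≤ p
    have hsub : Finset.range (i+1) ⊆ Finset.range (p+1) := by
      apply Finset.range_subset_range.mpr; omega
    rw [← Finset.sum_subset hsub (fun r hr1 hr2 => ?_)]
    · -- main sum over r ≤ i
      have hterm : ∀ r ∈ Finset.range (i+1),
          (p.choose r : ℚ) * 2^r *
            ∑ m ∈ range (i+1), (-1:ℚ)^m * ((p+1).choose m) * ((i-m).choose r)
          = (p.choose i : ℚ) * (2^r * (-1:ℚ)^(i-r) * (i.choose r)) := by
        intro r hr
        have hri : r ≤ i := Nat.lt_succ_iff.mp (Finset.mem_range.mp hr)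
        rw [G p i r (by omega) hri]
        have hm : (p.choose i : ℚ) * (i.choose r) = (p.choose r : ℚ) * ((p-r).choose (i-r)) := by
          rw_mod_cast [Nat.choose_mul hri]
        linear_combination (-((-1:ℚ)^(i-r)) * 2^r) * hm
      rw [Finset.sum_congr rfl hterm, ← Finset.mul_sum]
      have hpow : ∑ r ∈ range (i+1), (2:ℚ)^r * (-1:ℚ)^(i-r) * (i.choose r) = 1 := by
        have := add_pow (2:ℚ) (-1) i
        simp only [show (2:ℚ) + (-1) = 1 by norm_num, one_pow] at this
        rw [← this]
      rw [hpow, mul_one]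
    · -- vanishing terms r > i
      have hri : i < r := by
        simp only [Finset.mem_range] at hr1 hr2; omega
      have : ∑ m ∈ range (i+1), (-1:ℚ)^m * ((p+1).choose m) * ((i-m).choose r) = 0 := by
        apply Finset.sum_eq_zero
        intro m _
        have : (i-m).choose r = 0 := Nat.choose_eq_zero_of_lt (by omega)
        rw [this]; push_cast; ring
      rw [this, mul_zero]

/-- ℕ-indexed entry function for `delannoyMatrix`. -/
def Wf (p i k : ℕ) : ℚ :=
  if k = 0 then (p.descFactorial i : ℚ)
  else (-1 : ℚ) ^ (i + 1 - k) * (Nat.choose i (k - 1)) * ((p + 1).descFactorial (i + 1 - k) : ℚ)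

lemma delannoyMatrix_eq_Wf (p q : ℕ) (i j : Fin (q+1)) :
    delannoyMatrix p q i j = Wf p (i : ℕ) (j : ℕ) := rfl

/-- ℕ-indexed entry for the first column of the triangular matrix `T`. -/
def Tf (p k : ℕ) : ℚ :=
  if k = 0 then 1 else -(((k-1).factorial : ℚ) * (delannoy p (k-1) : ℚ))

/-- The unitriangular column-operation matrix. -/
def Tmat (p q : ℕ) : Matrix (Fin (q + 1)) (Fin (q + 1)) ℚ :=
  Matrix.of fun i j =>
    if (j : ℕ) = 0 then Tf p (i : ℕ) else if i = j then 1 else 0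

lemma Tmat_det (p q : ℕ) : (Tmat p q).det = 1 := by
  rw [Matrix.det_of_lowerTriangular (Tmat p q) ?ht]
  · apply Finset.prod_eq_one
    intro i _
    by_cases h : (i : ℕ) = 0
    · simp [Tmat, Tf, h, Fin.val_eq_zero_iff.mp h]
    · simp [Tmat, h, Fin.val_ne_zero_iff.mp h]
  case ht =>
    intro i j hij
    have hij' : i < j := hij
    have hj0 : (j : ℕ) ≠ 0 := by
      have : (i : ℕ) < (j : ℕ) := hij'
      omega
    have hij'' : i ≠ j := ne_of_lt hij'
    simp [Tmat, hj0, hij'', Fin.val_ne_zero_iff.mp hj0]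

lemma claimB (p I : ℕ) :
    ∑ t ∈ range (I+1), (-1:ℚ)^(I-t) * (I.choose t) * ((p+1).descFactorial (I-t) : ℚ) *
        ((t.factorial : ℚ) * (delannoy p t : ℚ))
      = (p.descFactorial I : ℚ) := by
  rw [← Finset.sum_range_reflect]
  have hterm : ∀ j ∈ range (I+1),
      (-1:ℚ)^(I-(I+1-1-j)) * (I.choose (I+1-1-j)) * ((p+1).descFactorial (I-(I+1-1-j)) : ℚ) *
        (((I+1-1-j).factorial : ℚ) * (delannoy p (I+1-1-j) : ℚ))
      = (I.factorial : ℚ) * ((-1:ℚ)^j * ((p+1).choose j) * (delannoy p (I-j) : ℚ)) := by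
    intro j hj
    have hjI : j ≤ I := Nat.lt_succ_iff.mp (Finset.mem_range.mp hj)
    have e1 : I + 1 - 1 - j = I - j := by omega
    have e2 : I - (I - j) = j := Nat.sub_sub_self hjI
    rw [e1, e2]
    have h1 : (I.choose (I-j) : ℚ) * ((I-j).factorial : ℚ) * (j.factorial : ℚ)
        = (I.factorial : ℚ) := by
      have := Nat.choose_mul_factorial_mul_factorial (Nat.sub_le I j)
      rw [e2] at this
      exact_mod_cast this
    have h2 : ((p+1).descFactorial j : ℚ) = (j.factorial : ℚ) * ((p+1).choose j : ℚ) := by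
      exact_mod_cast Nat.descFactorial_eq_factorial_mul_choose (p+1) j
    rw [h2]
    linear_combination ((-1:ℚ)^j * ((p+1).choose j) * (delannoy p (I-j) : ℚ)) * h1
  rw [Finset.sum_congr rfl hterm, ← Finset.mul_sum, key p I]
  have : (p.descFactorial I : ℚ) = (I.factorial : ℚ) * (p.choose I : ℚ) := by
    exact_mod_cast Nat.descFactorial_eq_factorial_mul_choose p I
  rw [this]

lemma WT_col0_sum (p q I : ℕ) (hIq : I ≤ q) :
    (p.descFactorial I : ℚ) - ∑ t ∈ range q, ((-1:ℚ)^(I-t) * (I.choose t) *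
        ((p+1).descFactorial (I-t) : ℚ) * ((t.factorial : ℚ) * (delannoy p t : ℚ)))
    = if I = q then (q.factorial : ℚ) * (delannoy p q : ℚ) else 0 := by
  by_cases hiq : I = q
  · subst hiq
    rw [if_pos rfl]
    have hB := claimB p I
    rw [Finset.sum_range_succ] at hB
    simp only [Nat.sub_self, Nat.choose_self, pow_zero, Nat.descFactorial_zero,
      Nat.cast_one, one_mul, mul_one] at hB
    linarith [hB]
  · rw [if_neg hiq]
    have hss : range (I+1) ⊆ range q := Finset.range_subset_range.mpr (by omega)
    have heq : ∑ t ∈ range q, ((-1:ℚ)^(I-t) * (I.choose t) *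
          ((p+1).descFactorial (I-t) : ℚ) * ((t.factorial : ℚ) * (delannoy p t : ℚ)))
        = ∑ t ∈ range (I+1), ((-1:ℚ)^(I-t) * (I.choose t) *
          ((p+1).descFactorial (I-t) : ℚ) * ((t.factorial : ℚ) * (delannoy p t : ℚ))) := by
      symm
      apply Finset.sum_subset hss
      intro t ht1 ht2
      have hlt : I < t := by
        simp only [Finset.mem_range] at ht1 ht2
        omega
      rw [Nat.choose_eq_zero_of_lt hlt]
      push_cast
      ring
    rw [heq, claimB p I]
    ring

lemma WT_col0 (p q : ℕ) (i : Fin (q+1)) :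
    (delannoyMatrix p q * Tmat p q) i 0 =
      if (i : ℕ) = q then (q.factorial : ℚ) * (delannoy p q : ℚ) else 0 := by
  have hstep : (delannoyMatrix p q * Tmat p q) i 0
      = ∑ k ∈ range (q+1), Wf p (i:ℕ) k * Tf p k := by
    rw [Matrix.mul_apply, ← Fin.sum_univ_eq_sum_range (fun k => Wf p (i:ℕ) k * Tf p k) (q+1)]
    apply Finset.sum_congr rfl
    intro k _
    have hT : Tmat p q k (0 : Fin (q+1)) = Tf p (k:ℕ) := by simp [Tmat]
    rw [delannoyMatrix_eq_Wf, hT]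
  have hfs : ∀ t, Wf p (i:ℕ) (t+1) * Tf p (t+1)
      = -((-1:ℚ)^((i:ℕ)-t) * ((i:ℕ).choose t) * ((p+1).descFactorial ((i:ℕ)-t) : ℚ) *
          ((t.factorial : ℚ) * (delannoy p t : ℚ))) := by
    intro t
    simp only [Wf, Tf, Nat.succ_ne_zero, if_false, Nat.add_sub_cancel,
      Nat.succ_sub_succ_eq_sub, Nat.sub_zero]
    ring
  rw [hstep, Finset.sum_range_succ']
  have hf0 : Wf p (i:ℕ) 0 * Tf p 0 = (p.descFactorial (i:ℕ) : ℚ) := by simp [Wf, Tf]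
  rw [hf0, Finset.sum_congr rfl (fun t _ => hfs t), Finset.sum_neg_distrib]
  have := WT_col0_sum p q (i:ℕ) (by omega)
  linarith [this]

lemma WT_col_ne (p q : ℕ) (i j : Fin (q+1)) (hj : (j : ℕ) ≠ 0) :
    (delannoyMatrix p q * Tmat p q) i j = delannoyMatrix p q i j := by
  rw [Matrix.mul_apply, Finset.sum_eq_single j]
  · have hT : Tmat p q j j = 1 := by simp [Tmat, hj, Fin.val_ne_zero_iff.mp hj]
    rw [hT, mul_one]
  · intro k _ hkj
    have hT : Tmat p q k j = 0 := by simp [Tmat, hj, hkj, Fin.val_ne_zero_iff.mp hj]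
    rw [hT, mul_zero]
  · intro h
    exact absurd (Finset.mem_univ j) h

lemma WT_det (p q : ℕ) :
    (delannoyMatrix p q).det = (-1:ℚ)^q * ((q.factorial : ℚ) * (delannoy p q : ℚ)) := by
  set M := delannoyMatrix p q * Tmat p q with hM
  have hMW : M.det = (delannoyMatrix p q).det := by
    rw [hM, Matrix.det_mul, Tmat_det, mul_one]
  set N := M.submatrix id (finRotate (q+1)) with hN
  have hNtri : N.BlockTriangular OrderDual.toDual := by
    intro i j hij
    have hij' : i < j := hij
    show M i (finRotate (q+1) j) = 0
    by_cases hjq : (j : ℕ) = q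
    · have hjl : j = Fin.last q := Fin.ext (by simpa using hjq)
      rw [hjl, finRotate_last, hM, WT_col0]
      have : (i : ℕ) ≠ q := by
        have := Fin.lt_iff_val_lt_val.mp hij'
        omega
      rw [if_neg this]
    · have hjlt : j < Fin.last q := by
        rw [Fin.lt_iff_val_lt_val, Fin.val_last]
        omega
      have hval : ((finRotate (q+1)) j : ℕ) = (j : ℕ) + 1 := by
        rw [finRotate_succ_apply, Fin.val_add_one_of_lt hjlt]
      have hne : ((finRotate (q+1)) j : ℕ) ≠ 0 := by omega
      rw [hM, WT_col_ne p q i _ hne, delannoyMatrix_eq_Wf, hval]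
      have hchoose : (i:ℕ).choose ((j:ℕ) + 1 - 1) = 0 := by
        apply Nat.choose_eq_zero_of_lt
        have := Fin.lt_iff_val_lt_val.mp hij'
        omega
      simp only [Wf, Nat.succ_ne_zero, if_false, hchoose, Nat.cast_zero]
      ring
  have hNdet : N.det = (q.factorial : ℚ) * (delannoy p q : ℚ) := by
    rw [Matrix.det_of_lowerTriangular N hNtri, Fin.prod_univ_castSucc]
    have hlast : N (Fin.last q) (Fin.last q) = (q.factorial : ℚ) * (delannoy p q : ℚ) := by
      show M (Fin.last q) (finRotate (q+1) (Fin.last q)) = _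
      rw [finRotate_last, hM, WT_col0]
      simp
    have hdiag : ∀ i : Fin q, N i.castSucc i.castSucc = 1 := by
      intro i
      show M i.castSucc (finRotate (q+1) i.castSucc) = 1
      have hlt : i.castSucc < Fin.last q := by
        rw [Fin.lt_iff_val_lt_val, Fin.val_last, Fin.coe_castSucc]
        exact i.isLt
      have hval : ((finRotate (q+1)) i.castSucc : ℕ) = (i : ℕ) + 1 := by
        rw [finRotate_succ_apply, Fin.val_add_one_of_lt hlt, Fin.coe_castSucc]
      have hne : ((finRotate (q+1)) i.castSucc : ℕ) ≠ 0 := by omega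
      rw [hM, WT_col_ne p q _ _ hne, delannoyMatrix_eq_Wf, hval, Fin.coe_castSucc]
      simp [Wf]
    rw [hlast, Finset.prod_congr rfl (fun i _ => hdiag i), Finset.prod_const_one, one_mul]
  have hperm := Matrix.det_permute' (finRotate (q+1)) M
  rw [← hN, sign_finRotate] at hperm
  rw [hNdet] at hperm
  have hsq : ((((-1 : ℤˣ)^q : ℤˣ) : ℤ) : ℚ) = (-1:ℚ)^q := by
    push_cast
    norm_num
  rw [Nat.add_sub_cancel, hsq] at hperm
  rw [← hMW]
  have h2 : (-1:ℚ)^q * ((q.factorial : ℚ) * (delannoy p q : ℚ)) = (-1:ℚ)^q * ((-1:ℚ)^q * M.det) := by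
    rw [← hperm]
  rw [h2, ← mul_assoc, ← mul_pow]
  norm_num

/-- A determinantal expression of the Delannoy numbers:
`D(p,q) = ((-1)^q / q!) · det W(p,q)`. -/
theorem delannoy_eq_det (p q : ℕ) :
    (delannoy p q : ℚ) =
      (-1 : ℚ) ^ q / (q.factorial : ℚ) * (delannoyMatrix p q).det := by
  rw [WT_det]
  have hq : (q.factorial : ℚ) ≠ 0 := by
    exact_mod_cast q.factorial_ne_zero
  field_simp
  rw [← pow_mul, pow_mul']
  norm_num
end

section
/- For every integer n ≥ 0, the central Delannoy number D(n) = D(n,n) satisfies D(n) = ((-1)^n / n!) · det W, where W is the (n+1)×(n+1) matrix whose first column has entries W_{i,1} = ⟨n⟩_{i-1} for 1 ≤ i ≤ n+1, and whose remaining entries are W_{i,j} = (-1)^{i-j} · C(i-1, j-1) · ⟨n+1⟩_{i-j} for 1 ≤ i ≤ n+1 and 2 ≤ j ≤ n+1 (entries with i-j < 0 being 0). -/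
open Finset

lemma altSum (a : ℕ) : ∀ i : ℕ, ∑ m ∈ range (i+1), (-1:ℚ)^m * (a+1).choose m = (-1)^i * a.choose i := by
  intro i
  induction i with
  | zero => simp
  | succ i ih =>
    rw [Finset.sum_range_succ, ih, Nat.choose_succ_succ a i]
    push_cast
    ring

lemma keyA (a : ℕ) : ∀ i : ℕ, ∀ j : ℕ, j ≤ i → i ≤ a →
    ∑ m ∈ range (i+1), (-1:ℚ)^m * (a+1).choose m * (i-m).choose j
      = (-1)^(i-j) * (a-j).choose (i-j) := by
  intro i
  induction i with
  | zero =>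
    intro j hj _
    interval_cases j
    simp
  | succ i ih =>
    intro j hj hia
    rcases Nat.lt_or_ge j (i+1) with hj' | hj'
    · -- j ≤ i
      have hji : j ≤ i := Nat.lt_succ_iff.mp hj'
      rcases Nat.eq_zero_or_pos j with rfl | hjpos
      · simpa using altSum a (i+1)
      · obtain ⟨jj, rfl⟩ := Nat.exists_eq_add_of_le hjpos
        -- j = 1 + jj
        rw [Finset.sum_range_succ]
        have hmid : ∀ m ∈ range (i+1),
            (-1:ℚ)^m * (a+1).choose m * (i+1-m).choose (1+jj)
            = (-1:ℚ)^m * (a+1).choose m * (i-m).choose (1+jj)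
              + (-1:ℚ)^m * (a+1).choose m * (i-m).choose jj := by
          intro m hm
          rw [Finset.mem_range] at hm
          have h1 : i + 1 - m = (i - m) + 1 := by omega
          rw [h1, add_comm 1 jj, Nat.choose_succ_succ (i-m) jj]
          push_cast
          ring
        rw [Finset.sum_congr rfl hmid, Finset.sum_add_distrib,
          ih (1+jj) hji (le_of_lt hia), ih jj (by omega) (le_of_lt hia)]
        have hz : ((i + 1 - (i+1)).choose (1+jj) : ℚ) = 0 := by
          simp [Nat.choose_eq_zero_of_lt (by omega : 0 < 1 + jj)]
        rw [hz]
        -- now pure arithmetic with nat subs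
        have e1 : i - jj = (i - (1+jj)) + 1 := by omega
        have e2 : a - jj = (a - (1+jj)) + 1 := by omega
        have e3 : i + 1 - (1+jj) = (i - (1+jj)) + 1 := by omega
        rw [e1, e2, e3, Nat.choose_succ_succ (a - (1+jj)) (i - (1+jj))]
        push_cast
        ring
    · -- j = i+1 : only m = 0 survives
      have hje : j = i + 1 := le_antisymm hj hj'
      subst hje
      rw [Finset.sum_eq_single 0]
      · simp
      · intro m hm hm0
        rw [Finset.mem_range] at hm
        have : i + 1 - m < i + 1 := by omega
        simp [Nat.choose_eq_zero_of_lt this]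
      · simp

lemma star (n : ℕ) (i : ℕ) (hi : i ≤ n) :
    ∑ k ∈ range (i+1), (-1:ℚ)^(i-k) * (n+1).choose (i-k) * delannoy n k
      = n.choose i := by
  have expand : ∀ k, (delannoy n k : ℚ)
      = ∑ j ∈ range (n+1), (n.choose j : ℚ) * k.choose j * 2^j := by
    intro k; unfold delannoy; push_cast; ring_nf
  calc ∑ k ∈ range (i+1), (-1:ℚ)^(i-k) * (n+1).choose (i-k) * delannoy n k
      = ∑ k ∈ range (i+1), ∑ j ∈ range (n+1),
          (-1:ℚ)^(i-k) * (n+1).choose (i-k) * ((n.choose j : ℚ) * k.choose j * 2^j) := by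
        refine Finset.sum_congr rfl fun k _ => ?_
        rw [expand, Finset.mul_sum]
    _ = ∑ j ∈ range (n+1), (n.choose j : ℚ) * 2^j *
          ∑ k ∈ range (i+1), (-1:ℚ)^(i-k) * (n+1).choose (i-k) * (k.choose j : ℚ) := by
        rw [Finset.sum_comm]
        refine Finset.sum_congr rfl fun j _ => ?_
        rw [Finset.mul_sum]
        refine Finset.sum_congr rfl fun k _ => ?_
        ring
    _ = ∑ j ∈ range (i+1), (n.choose j : ℚ) * 2^j *
          ∑ k ∈ range (i+1), (-1:ℚ)^(i-k) * (n+1).choose (i-k) * (k.choose j : ℚ) := by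
        symm
        apply Finset.sum_subset
        · intro x hx; rw [Finset.mem_range] at *; omega
        · intro j hj hj'
          rw [Finset.mem_range] at *
          have : ∀ k ∈ range (i+1), (-1:ℚ)^(i-k) * (n+1).choose (i-k) * (k.choose j : ℚ) = 0 := by
            intro k hk
            rw [Finset.mem_range] at hk
            have : k.choose j = 0 := Nat.choose_eq_zero_of_lt (by omega)
            simp [this]
          rw [Finset.sum_eq_zero this, mul_zero]
    _ = ∑ j ∈ range (i+1), (n.choose j : ℚ) * 2^j * ((-1)^(i-j) * ((n-j).choose (i-j) : ℚ)) := by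
        refine Finset.sum_congr rfl fun j hj => ?_
        rw [Finset.mem_range] at hj
        congr 1
        rw [← keyA n i j (by omega) hi]
        rw [← Finset.sum_range_reflect]
        refine Finset.sum_congr rfl fun m hm => ?_
        rw [Finset.mem_range] at hm
        have h1 : i - (i + 1 - 1 - m) = m := by omega
        have h2 : i + 1 - 1 - m = i - m := by omega
        rw [h1, h2]
    _ = (n.choose i : ℚ) * ∑ j ∈ range (i+1), (2:ℚ)^j * (-1)^(i-j) * (i.choose j : ℚ) := by
        rw [Finset.mul_sum]
        refine Finset.sum_congr rfl fun j hj => ?_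
        rw [Finset.mem_range] at hj
        have : (n.choose i : ℚ) * (i.choose j : ℚ) = (n.choose j : ℚ) * ((n-j).choose (i-j) : ℚ) := by
          rw [← Nat.cast_mul, ← Nat.cast_mul, Nat.choose_mul (n := n) (k := i) (s := j) (by omega)]
        calc (n.choose j : ℚ) * 2^j * ((-1)^(i-j) * ((n-j).choose (i-j) : ℚ))
            = (n.choose j : ℚ) * ((n-j).choose (i-j) : ℚ) * (2^j * (-1)^(i-j)) := by ring
          _ = (n.choose i : ℚ) * (i.choose j : ℚ) * (2^j * (-1)^(i-j)) := by rw [← this]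
          _ = (n.choose i : ℚ) * (2^j * (-1)^(i-j) * (i.choose j : ℚ)) := by ring
    _ = (n.choose i : ℚ) := by
        have := add_pow (2:ℚ) (-1) i
        have h2 : ((2:ℚ) + (-1))^i = 1 := by norm_num
        rw [h2] at this
        rw [← this]
        exact mul_one _

lemma rowSum (n i : ℕ) (hi : i ≤ n) :
    (n.descFactorial i : ℚ)
      - ∑ k ∈ range n, (-1:ℚ)^(i-k) * (i.choose k) * ((n+1).descFactorial (i-k))
          * ((k.factorial : ℚ) * delannoy n k)
    = if i = n then (n.factorial : ℚ) * delannoy n n else 0 := by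
  have term : ∀ k, k ≤ i →
      (-1:ℚ)^(i-k) * (i.choose k) * ((n+1).descFactorial (i-k))
          * ((k.factorial : ℚ) * delannoy n k)
      = (i.factorial : ℚ) * ((-1:ℚ)^(i-k) * ((n+1).choose (i-k)) * delannoy n k) := by
    intro k hk
    have h1 : (((n+1).descFactorial (i-k)) : ℚ)
        = ((i-k).factorial : ℚ) * ((n+1).choose (i-k) : ℚ) := by
      rw [Nat.descFactorial_eq_factorial_mul_choose]; push_cast; ring
    have h2 : (i.choose k : ℚ) * (k.factorial : ℚ) * ((i-k).factorial : ℚ)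
        = (i.factorial : ℚ) := by
      rw_mod_cast [Nat.choose_mul_factorial_mul_factorial hk]
    rw [h1]
    linear_combination ((-1:ℚ)^(i-k) * ((n+1).choose (i-k) : ℚ) * (delannoy n k : ℚ)) * h2
  have hdesc : (n.descFactorial i : ℚ) = (i.factorial : ℚ) * (n.choose i : ℚ) := by
    rw [Nat.descFactorial_eq_factorial_mul_choose]; push_cast; ring
  rcases Nat.lt_or_ge i n with hin | hin
  · -- i < n
    rw [if_neg (by omega)]
    have hsub : ∑ k ∈ range n, (-1:ℚ)^(i-k) * (i.choose k) * ((n+1).descFactorial (i-k))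
          * ((k.factorial : ℚ) * delannoy n k)
        = ∑ k ∈ range (i+1), (-1:ℚ)^(i-k) * (i.choose k) * ((n+1).descFactorial (i-k))
          * ((k.factorial : ℚ) * delannoy n k) := by
      symm
      apply Finset.sum_subset
      · intro x hx; rw [Finset.mem_range] at *; omega
      · intro k hk hk'
        rw [Finset.mem_range] at *
        have : i.choose k = 0 := Nat.choose_eq_zero_of_lt (by omega)
        simp [this]
    rw [hsub, Finset.sum_congr rfl (fun k hk => term k (by rw [Finset.mem_range] at hk; omega)),
      ← Finset.mul_sum, star n i hi, hdesc]
    ring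
  · -- i = n
    have hieq : i = n := le_antisymm hi hin
    subst hieq
    rw [if_pos rfl]
    have hfull : ∑ k ∈ range (i+1), (-1:ℚ)^(i-k) * (i.choose k) * ((i+1).descFactorial (i-k))
          * ((k.factorial : ℚ) * delannoy i k)
        = (i.factorial : ℚ) := by
      rw [Finset.sum_congr rfl (fun k hk => term k (by rw [Finset.mem_range] at hk; omega)),
        ← Finset.mul_sum, star i i le_rfl]
      simp
    have htop : (-1:ℚ)^(i-i) * (i.choose i) * ((i+1).descFactorial (i-i))
          * ((i.factorial : ℚ) * delannoy i i)
        = (i.factorial : ℚ) * delannoy i i := by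
      rw [term i le_rfl]
      simp
    rw [Finset.sum_range_succ, htop] at hfull
    have : i.descFactorial i = i.factorial := Nat.descFactorial_self i
    rw [this]
    linarith [hfull]

/-- A determinantal expression of the central Delannoy numbers:
`D(n) = D(n,n) = ((-1)^n / n!) · det W(n,n)`. -/
theorem centralDelannoy_eq_det (n : ℕ) :
    (delannoy n n : ℚ) =
      (-1 : ℚ) ^ n / (n.factorial : ℚ) * (delannoyMatrix n n).det := by
  set A := delannoyMatrix n n with hA
  set α : ℚ := (n.factorial : ℚ) * delannoy n n with hα
  set c : Fin (n+1) → ℚ := fun j =>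
    if (j : ℕ) = 0 then 1 else -((((j : ℕ)-1).factorial : ℚ) * delannoy n ((j : ℕ)-1)) with hc
  have hcol : (fun k => ∑ j : Fin (n+1), c j • A k j) = Pi.single (Fin.last n) α := by
    funext i
    rw [Fin.sum_univ_succ]
    have h0 : c 0 • A i 0 = (n.descFactorial (i:ℕ) : ℚ) := by
      simp [hc, hA, delannoyMatrix]
    have hterm : ∀ j : Fin n, c j.succ • A i j.succ
        = -((-1:ℚ)^((i:ℕ)-(j:ℕ)) * (((i:ℕ)).choose (j:ℕ))
            * ((n+1).descFactorial ((i:ℕ)-(j:ℕ))) * (((j:ℕ).factorial : ℚ) * delannoy n (j:ℕ))) := by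
      intro j
      have hj : ((j.succ : Fin (n+1)) : ℕ) = (j:ℕ) + 1 := by simp
      have h1 : ((i:ℕ) + 1 - ((j:ℕ)+1)) = (i:ℕ) - (j:ℕ) := by omega
      have h2 : ((j:ℕ)+1) - 1 = (j:ℕ) := by omega
      simp only [hc, hA, delannoyMatrix, Matrix.of_apply, hj, h1, h2, smul_eq_mul]
      rw [if_neg (by omega), if_neg (by omega)]
      ring
    rw [Finset.sum_congr rfl (fun j _ => hterm j)]
    have hfin : ∑ j : Fin n, -((-1:ℚ)^((i:ℕ)-(j:ℕ)) * (((i:ℕ)).choose (j:ℕ))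
            * ((n+1).descFactorial ((i:ℕ)-(j:ℕ))) * (((j:ℕ).factorial : ℚ) * delannoy n (j:ℕ)))
        = ∑ k ∈ range n, -((-1:ℚ)^((i:ℕ)-k) * (((i:ℕ)).choose k)
            * ((n+1).descFactorial ((i:ℕ)-k)) * ((k.factorial : ℚ) * delannoy n k)) :=
      Fin.sum_univ_eq_sum_range (fun k => -((-1:ℚ)^((i:ℕ)-k) * (((i:ℕ)).choose k)
            * (((n+1).descFactorial ((i:ℕ)-k) : ℕ) : ℚ) * ((k.factorial : ℚ) * delannoy n k))) n
    rw [hfin, h0, Finset.sum_neg_distrib, ← sub_eq_add_neg,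
      rowSum n (i:ℕ) (by omega)]
    rcases eq_or_ne i (Fin.last n) with rfl | hne
    · rw [if_pos (by simp), Pi.single_eq_same]
    · rw [if_neg (fun h => hne (by ext; simpa using h)), Pi.single_eq_of_ne hne]
  have hdet1 : (A.updateCol 0 (Pi.single (Fin.last n) α)).det = A.det := by
    rw [← hcol]
    rw [Matrix.det_updateCol_sum A 0 c]
    have : c 0 = 1 := by simp [hc]
    rw [this, one_smul]
  set M := A.updateCol 0 (Pi.single (Fin.last n) α) with hM
  have hMdet : M.det = (-1:ℚ)^n * α := by
    rw [Matrix.det_succ_column_zero]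
    rw [Finset.sum_eq_single (Fin.last n)]
    · have hM0 : M (Fin.last n) 0 = α := by
        rw [hM, Matrix.updateCol_self, Pi.single_eq_same]
      rw [hM0, Fin.val_last]
      have hsub : (M.submatrix (Fin.last n).succAbove Fin.succ).det = 1 := by
        have hB : ∀ i j : Fin n, M.submatrix (Fin.last n).succAbove Fin.succ i j
            = (-1:ℚ)^((i:ℕ)-(j:ℕ)) * (((i:ℕ)).choose (j:ℕ))
              * ((n+1).descFactorial ((i:ℕ)-(j:ℕ))) := by
          intro i j
          rw [Matrix.submatrix_apply, Fin.succAbove_last, hM,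
            Matrix.updateCol_apply, if_neg (Fin.succ_ne_zero j)]
          have hj : ((j.succ : Fin (n+1)) : ℕ) = (j:ℕ) + 1 := by simp
          have hi : ((i.castSucc : Fin (n+1)) : ℕ) = (i:ℕ) := by simp
          simp only [hA, delannoyMatrix, Matrix.of_apply, hj, hi]
          rw [if_neg (by omega)]
          have h1 : ((i:ℕ) + 1 - ((j:ℕ)+1)) = (i:ℕ) - (j:ℕ) := by omega
          have h2 : ((j:ℕ)+1) - 1 = (j:ℕ) := by omega
          rw [h1, h2]
        rw [Matrix.det_of_lowerTriangular _ ?ht]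
        · apply Finset.prod_eq_one
          intro i _
          rw [hB i i]
          simp
        · intro i j hij
          rw [hB i j]
          have : (i:ℕ) < (j:ℕ) := hij
          rw [Nat.choose_eq_zero_of_lt this]
          simp
      rw [hsub, mul_one]
    · intro i _ hne
      have : M i 0 = 0 := by
        rw [hM, Matrix.updateCol_self, Pi.single_eq_of_ne hne]
      rw [this, mul_zero, zero_mul]
    · intro h
      exact absurd (Finset.mem_univ _) h
  rw [← hdet1, hMdet, hα]
  have hn : (n.factorial : ℚ) ≠ 0 := Nat.cast_ne_zero.mpr n.factorial_ne_zero
  have key : (-1:ℚ)^n * ((-1:ℚ)^n * ((n.factorial:ℚ) * delannoy n n))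
      = (n.factorial:ℚ) * delannoy n n := by
    rw [← mul_assoc, ← mul_pow]; norm_num
  rw [div_mul_eq_mul_div, key]
  exact (mul_div_cancel_left₀ _ hn).symm
end

section
/- For all integers p, q ≥ 0, the Delannoy numbers satisfy the recursive relation D(p,q) = C(p,q) + (-1)^{q-1} · ∑_{r=0}^{q-1} (-1)^r · C(p+1, q-r) · D(p,r). -/
open Finset

private lemma lemB (n m : ℕ) :
    ∑ k ∈ range (m+1), (-1:ℚ)^k * ((n+1).choose k : ℚ) = (-1:ℚ)^m * (n.choose m : ℚ) := by
  induction m with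
  | zero => simp
  | succ m ih =>
    rw [sum_range_succ, ih, Nat.choose_succ_succ (n) m]
    push_cast
    ring

private lemma lemA (p : ℕ) : ∀ q i, i ≤ p →
    (∑ k ∈ range (q+1), (-1:ℚ)^k * ((p+1).choose k : ℚ) * ((q-k).choose i : ℚ))
    = if i ≤ q then (-1:ℚ)^(q-i) * ((p-i).choose (q-i) : ℚ) else 0 := by
  intro q
  induction q with
  | zero =>
    intro i hi
    match i with
    | 0 => simp
    | j+1 => simp
  | succ q ih =>
    intro i hip
    match i with
    | 0 =>
      simp only [Nat.choose_zero_right, Nat.cast_one, mul_one, Nat.le_zero]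
      rw [if_pos (Nat.zero_le _), lemB p (q+1)]
      simp
    | j+1 =>
      rw [sum_range_succ]
      have hlast : ((q+1-(q+1)).choose (j+1) : ℚ) = 0 := by simp
      rw [hlast, mul_zero, add_zero]
      have hsplit : ∀ k ∈ range (q+1),
          (-1:ℚ)^k * ((p+1).choose k : ℚ) * ((q+1-k).choose (j+1) : ℚ)
          = (-1:ℚ)^k * ((p+1).choose k : ℚ) * ((q-k).choose j : ℚ)
            + (-1:ℚ)^k * ((p+1).choose k : ℚ) * ((q-k).choose (j+1) : ℚ) := by
        intro k hk
        have hk' : k ≤ q := Nat.lt_succ_iff.mp (mem_range.mp hk)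
        have : q + 1 - k = (q - k) + 1 := by omega
        rw [this, Nat.choose_succ_succ]
        push_cast
        ring
      rw [sum_congr rfl hsplit, sum_add_distrib, ih j (le_trans (Nat.le_succ j) hip),
        ih (j+1) hip]
      by_cases h1 : j + 1 ≤ q
      · rw [if_pos h1, if_pos (le_trans (Nat.le_succ j) h1), if_pos (le_trans h1 (Nat.le_succ q))]
        have e1 : q + 1 - (j+1) = q - j := by omega
        have e2 : q - (j+1) = (q - j) - 1 := by omega
        have e3 : p - j = (p - (j+1)) + 1 := by omega
        have e4 : q - j = (q - (j+1)) + 1 := by omega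
        rw [e1, e2]
        rw [e3, e4, Nat.choose_succ_succ]
        have e5 : (q - (j+1)) + 1 - 1 = q - (j+1) := by omega
        rw [e5]
        push_cast
        have : (-1:ℚ)^(q-(j+1)+1) = -(-1:ℚ)^(q-(j+1)) := by rw [pow_succ]; ring
        rw [this]
        ring
      · by_cases h2 : j ≤ q
        · have hjq : j = q := by omega
          subst hjq
          rw [if_pos le_rfl, if_neg h1, if_pos le_rfl]
          simp
        · rw [if_neg h2, if_neg h1, if_neg (by omega)]
          simp

private lemma lemT (p q : ℕ) :
    ∑ r ∈ range (q+1), (-1:ℚ)^r * ((p + 1).choose (q - r) : ℚ) * (delannoy p r : ℚ)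
      = (-1:ℚ)^q * (p.choose q : ℚ) := by
  have hD : ∀ r, (delannoy p r : ℚ) = ∑ i ∈ range (p+1),
      (p.choose i : ℚ) * (r.choose i : ℚ) * 2^i := by
    intro r; unfold delannoy; push_cast; ring_nf
  -- rewrite and swap sums
  calc ∑ r ∈ range (q+1), (-1:ℚ)^r * ((p + 1).choose (q - r) : ℚ) * (delannoy p r : ℚ)
      = ∑ i ∈ range (p+1), (p.choose i : ℚ) * 2^i *
          ∑ r ∈ range (q+1), (-1:ℚ)^r * ((p + 1).choose (q - r) : ℚ) * (r.choose i : ℚ) := by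
        simp_rw [hD, mul_sum]
        rw [Finset.sum_comm]
        apply sum_congr rfl; intro i _; apply sum_congr rfl; intro r _; ring
    _ = ∑ i ∈ range (p+1), (p.choose i : ℚ) * 2^i *
          ((-1:ℚ)^q * ∑ k ∈ range (q+1), (-1:ℚ)^k * ((p + 1).choose k : ℚ) * ((q-k).choose i : ℚ)) := by
        apply sum_congr rfl; intro i _
        congr 1
        rw [← Finset.sum_range_reflect]
        rw [mul_sum]
        apply sum_congr rfl; intro k hk
        have hk' : k ≤ q := Nat.lt_succ_iff.mp (mem_range.mp hk)
        have e1 : q + 1 - 1 - k = q - k := by omega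
        have e2 : q - (q - k) = k := by omega
        rw [e1, e2]
        have hs : (-1:ℚ)^(q-k) = (-1:ℚ)^q * (-1:ℚ)^k := by
          have : q - k + k = q := by omega
          have hsq : (-1:ℚ)^k * (-1:ℚ)^k = 1 := by
            rw [← pow_add, ← two_mul, pow_mul]; norm_num
          calc (-1:ℚ)^(q-k) = (-1:ℚ)^(q-k) * ((-1:ℚ)^k * (-1:ℚ)^k) := by
                rw [hsq, mul_one]
            _ = (-1:ℚ)^q * (-1:ℚ)^k := by rw [← mul_assoc, ← pow_add, this]
        rw [hs]; ring
    _ = (-1:ℚ)^q * (p.choose q : ℚ) := by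
        have step : ∀ i ∈ range (p+1),
            (p.choose i : ℚ) * 2^i * ((-1:ℚ)^q *
              ∑ k ∈ range (q+1), (-1:ℚ)^k * ((p+1).choose k : ℚ) * ((q-k).choose i : ℚ))
            = (-1:ℚ)^q * ((p.choose q : ℚ) *
                (if i ≤ q then (q.choose i : ℚ) * 2^i * (-1:ℚ)^(q-i) else 0)) := by
          intro i hi
          have hip : i ≤ p := Nat.lt_succ_iff.mp (mem_range.mp hi)
          rw [lemA p q i hip]
          by_cases hiq : i ≤ q
          · rw [if_pos hiq, if_pos hiq]
            have key : (p.choose i : ℚ) * ((p-i).choose (q-i) : ℚ)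
                = (p.choose q : ℚ) * (q.choose i : ℚ) := by
              by_cases hqp : q ≤ p
              · have h := Nat.choose_mul (n := p) hiq
                exact_mod_cast h.symm
              · have h1 : p.choose q = 0 := Nat.choose_eq_zero_of_lt (by omega)
                have h2 : (p-i).choose (q-i) = 0 := Nat.choose_eq_zero_of_lt (by omega)
                simp [h1, h2]
            calc (p.choose i : ℚ) * 2^i * ((-1:ℚ)^q * ((-1:ℚ)^(q-i) * ((p-i).choose (q-i) : ℚ)))
                = ((p.choose i : ℚ) * ((p-i).choose (q-i) : ℚ)) * (2^i * ((-1:ℚ)^q * (-1:ℚ)^(q-i))) := by ring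
              _ = ((p.choose q : ℚ) * (q.choose i : ℚ)) * (2^i * ((-1:ℚ)^q * (-1:ℚ)^(q-i))) := by rw [key]
              _ = (-1:ℚ)^q * ((p.choose q : ℚ) * ((q.choose i : ℚ) * 2^i * (-1:ℚ)^(q-i))) := by ring
          · rw [if_neg hiq, if_neg hiq]
            ring
        rw [sum_congr rfl step, ← mul_sum, ← mul_sum]
        congr 1
        by_cases hqp : q ≤ p
        · rw [Finset.sum_ite, Finset.sum_const_zero, add_zero]
          have hfil : (range (p+1)).filter (fun i => i ≤ q) = range (q+1) := by
            ext x; simp [Nat.lt_succ_iff]; omega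
          rw [hfil]
          have hb := add_pow (2:ℚ) (-1) q
          norm_num at hb
          have hre : ∑ x ∈ range (q+1), (q.choose x : ℚ) * 2^x * (-1:ℚ)^(q-x)
              = ∑ m ∈ range (q+1), 2^m * (-1:ℚ)^(q-m) * (q.choose m : ℚ) := by
            apply sum_congr rfl; intro x _; ring
          rw [hre, ← hb, mul_one]
        · have h1 : p.choose q = 0 := Nat.choose_eq_zero_of_lt (by omega)
          simp [h1]

/-- A recursive relation of the Delannoy numbers:
`D(p,q) = C(p,q) + (-1)^{q-1} · ∑_{r=0}^{q-1} (-1)^r · C(p+1, q-r) · D(p,r)`. -/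
theorem delannoy_recursion (p q : ℕ) :
    (delannoy p q : ℚ) =
      (p.choose q : ℚ) + (-1 : ℚ) ^ ((q : ℤ) - 1) *
        ∑ r ∈ Finset.range q,
          (-1 : ℚ) ^ r * ((p + 1).choose (q - r) : ℚ) * (delannoy p r : ℚ) := by

  have hT := lemT p q
  rw [sum_range_succ] at hT
  simp only [Nat.sub_self, Nat.choose_zero_right, Nat.cast_one, mul_one] at hT
  have hz : (-1:ℚ)^((q:ℤ)-1) = -(-1:ℚ)^q := by
    rw [zpow_sub_one₀ (by norm_num : (-1:ℚ) ≠ 0), zpow_natCast]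
    norm_num
  have hsq : (-1:ℚ)^q * (-1:ℚ)^q = 1 := by
    rw [← pow_add, ← two_mul, pow_mul]; norm_num
  rw [hz]
  linear_combination ((-1:ℚ)^q) * hT - ((delannoy p q : ℚ) - (p.choose q : ℚ)) * hsq
end

section
/- Let u and v be n-times differentiable real functions on an open interval with v(t) ≠ 0 for all t in the interval. Then for every t in the interval, the n-th derivative of the quotient u/v at t equals (-1)^n · det(W(t)) / v(t)^{n+1}, where W(t) is the (n+1)×(n+1) matrix whose first column has entries W_{k,1}(t) = u^{(k-1)}(t) for 1 ≤ k ≤ n+1, and whose remaining entries are W_{i,j}(t) = C(i-1, j-1) · v^{(i-j)}(t) for 1 ≤ i ≤ n+1 and 2 ≤ j ≤ n+1 (entries with i-j < 0 being 0). -/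
open Set Finset

/-- Pascal-style recombination of sums. -/
private lemma pascal_sum (n : ℕ) (F G : ℕ → ℝ) :
    (∑ k ∈ Finset.range (n + 1), (n.choose k : ℝ) * F (k + 1) * G (n - k)) +
      (∑ k ∈ Finset.range (n + 1), (n.choose k : ℝ) * F k * G (n - k + 1)) =
    ∑ k ∈ Finset.range (n + 2), ((n + 1).choose k : ℝ) * F k * G (n + 1 - k) := by
  have hR : ∑ k ∈ Finset.range (n + 2), ((n + 1).choose k : ℝ) * F k * G (n + 1 - k)
      = (∑ k ∈ Finset.range (n + 1), ((n + 1).choose (k + 1) : ℝ) * F (k + 1) * G (n - k))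
        + F 0 * G (n + 1) := by
    rw [Finset.sum_range_succ' _ (n + 1)]
    simp [Nat.succ_sub_succ]
  have hL2 : ∑ k ∈ Finset.range (n + 1), (n.choose k : ℝ) * F k * G (n - k + 1)
      = (∑ k ∈ Finset.range (n + 1), (n.choose (k + 1) : ℝ) * F (k + 1) * G (n - k))
        + F 0 * G (n + 1) := by
    rw [Finset.sum_range_succ' _ n]
    have h2 : ∑ k ∈ Finset.range n, (n.choose (k + 1) : ℝ) * F (k + 1) * G (n - (k + 1) + 1)
        = ∑ k ∈ Finset.range n, (n.choose (k + 1) : ℝ) * F (k + 1) * G (n - k) := by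
      refine Finset.sum_congr rfl fun k hk => ?_
      rw [Finset.mem_range] at hk
      congr 2
      omega
    have h3 : ∑ k ∈ Finset.range (n + 1), (n.choose (k + 1) : ℝ) * F (k + 1) * G (n - k)
        = ∑ k ∈ Finset.range n, (n.choose (k + 1) : ℝ) * F (k + 1) * G (n - k) := by
      rw [Finset.sum_range_succ, Nat.choose_succ_self]
      simp
    rw [h2, h3]
    simp
  rw [hR, hL2, ← add_assoc, ← Finset.sum_add_distrib]
  congr 1
  refine Finset.sum_congr rfl fun k _ => ?_
  rw [Nat.choose_succ_succ]
  push_cast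
  ring

/-- Leibniz rule for iterated derivatives within a uniquely-differentiable set. -/
private lemma leibniz_aux {s : Set ℝ} (hu : UniqueDiffOn ℝ s) :
    ∀ (n : ℕ) (f g : ℝ → ℝ), ContDiffOn ℝ n f s → ContDiffOn ℝ n g s → ∀ t ∈ s,
      iteratedDerivWithin n (fun x => f x * g x) s t =
        ∑ k ∈ Finset.range (n + 1), (n.choose k : ℝ) *
          iteratedDerivWithin k f s t * iteratedDerivWithin (n - k) g s t := by
  intro n
  induction n with
  | zero => intro f g _ _ t ht; simp
  | succ n IH =>
    intro f g hf hg t ht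
    have hf' : ContDiffOn ℝ n (derivWithin f s) s :=
      hf.derivWithin hu (by exact_mod_cast le_refl (n + 1))
    have hg' : ContDiffOn ℝ n (derivWithin g s) s :=
      hg.derivWithin hu (by exact_mod_cast le_refl (n + 1))
    have hfn : ContDiffOn ℝ n f s := hf.of_le (by exact_mod_cast Nat.le_succ n)
    have hgn : ContDiffOn ℝ n g s := hg.of_le (by exact_mod_cast Nat.le_succ n)
    have hdf : DifferentiableOn ℝ f s :=
      hf.differentiableOn (by simp)
    have hdg : DifferentiableOn ℝ g s :=
      hg.differentiableOn (by simp)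
    have step : iteratedDerivWithin (n + 1) (fun x => f x * g x) s t =
        iteratedDerivWithin n
          ((fun x => derivWithin f s x * g x) + fun x => f x * derivWithin g s x) s t := by
      rw [iteratedDerivWithin_succ']
      refine iteratedDerivWithin_congr (fun y hy => ?_) ht
      rw [derivWithin_fun_mul (hdf y hy) (hdg y hy)]
      rfl
    rw [step, iteratedDerivWithin_add ht hu ((hf'.mul hgn) t ht) ((hfn.mul hg') t ht),
      IH _ _ hf' hgn t ht, IH _ _ hfn hg' t ht]
    simp only [← iteratedDerivWithin_succ']
    exact pascal_sum n (fun k => iteratedDerivWithin k f s t)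
      (fun k => iteratedDerivWithin k g s t)

private lemma det_aux (n : ℕ) (F G : ℕ → ℝ) :
    Matrix.det (Matrix.of fun i j : Fin (n + 1) =>
      if (j : ℕ) = 0 then
        ∑ m ∈ Finset.range ((i : ℕ) + 1), ((i : ℕ).choose m : ℝ) * F m * G ((i : ℕ) - m)
      else ((i : ℕ).choose ((j : ℕ) - 1) : ℝ) * G ((i : ℕ) + 1 - (j : ℕ))) =
    (-1 : ℝ) ^ n * F n * G 0 ^ (n + 1) := by
  set B : Matrix (Fin (n + 1)) (Fin (n + 1)) ℝ := Matrix.of fun i j =>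
    if (j : ℕ) = 0 then (if (i : ℕ) = n then G 0 else 0)
    else ((i : ℕ).choose ((j : ℕ) - 1) : ℝ) * G ((i : ℕ) + 1 - (j : ℕ)) with hBdef
  set d : Fin (n + 1) → ℝ := fun j => if (j : ℕ) = 0 then F n else F ((j : ℕ) - 1) with hddef
  have hW : (Matrix.of fun i j : Fin (n + 1) =>
      if (j : ℕ) = 0 then
        ∑ m ∈ Finset.range ((i : ℕ) + 1), ((i : ℕ).choose m : ℝ) * F m * G ((i : ℕ) - m)
      else ((i : ℕ).choose ((j : ℕ) - 1) : ℝ) * G ((i : ℕ) + 1 - (j : ℕ)))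
      = B.updateCol 0 (fun k => ∑ i, d i • B k i) := by
    ext i j
    rcases eq_or_ne j 0 with rfl | hj
    · rw [Matrix.updateCol_self]
      have e1 : ∀ jj : Fin (n + 1), d jj • B i jj =
          (fun m : ℕ => (if m = 0 then F n else F (m - 1)) *
            (if m = 0 then (if (i : ℕ) = n then G 0 else 0)
             else ((i : ℕ).choose (m - 1) : ℝ) * G ((i : ℕ) + 1 - m))) (jj : ℕ) := by
        intro jj
        simp only [hddef, hBdef, Matrix.of_apply, smul_eq_mul]
      have e2 : ∑ jj : Fin (n + 1), d jj • B i jj =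
          ∑ m ∈ Finset.range (n + 1), (if m = 0 then F n else F (m - 1)) *
            (if m = 0 then (if (i : ℕ) = n then G 0 else 0)
             else ((i : ℕ).choose (m - 1) : ℝ) * G ((i : ℕ) + 1 - m)) := by
        rw [← Fin.sum_univ_eq_sum_range]
        exact Finset.sum_congr rfl fun jj _ => e1 jj
      have h0 : ((0 : Fin (n + 1)) : ℕ) = 0 := rfl
      rw [Matrix.of_apply, if_pos h0, e2]
      conv_rhs => rw [Finset.sum_range_succ']
      have e5 : ∑ m ∈ Finset.range n, (if m + 1 = 0 then F n else F (m + 1 - 1)) *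
          (if m + 1 = 0 then (if (i : ℕ) = n then G 0 else 0)
           else ((i : ℕ).choose (m + 1 - 1) : ℝ) * G ((i : ℕ) + 1 - (m + 1)))
          = ∑ m ∈ Finset.range n, ((i : ℕ).choose m : ℝ) * F m * G ((i : ℕ) - m) := by
        refine Finset.sum_congr rfl fun m _ => ?_
        rw [if_neg (Nat.succ_ne_zero m), if_neg (Nat.succ_ne_zero m), Nat.add_sub_cancel,
          Nat.succ_sub_succ]
        ring
      rw [e5, if_pos rfl, if_pos rfl]
      have e3 : ∑ m ∈ Finset.range ((i : ℕ) + 1), ((i : ℕ).choose m : ℝ) * F m * G ((i : ℕ) - m)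
          = ∑ m ∈ Finset.range (n + 1), ((i : ℕ).choose m : ℝ) * F m * G ((i : ℕ) - m) := by
        refine Finset.sum_subset (Finset.range_subset_range.mpr (by omega)) ?_
        intro m _ hm
        rw [Finset.mem_range, not_lt] at hm
        have : (i : ℕ) < m := by omega
        simp [Nat.choose_eq_zero_of_lt this]
      rw [e3, Finset.sum_range_succ]
      congr 1
      rcases eq_or_ne (i : ℕ) n with hi | hi
      · rw [hi, if_pos rfl, Nat.choose_self, Nat.sub_self]
        push_cast; ring
      · have hilt : (i : ℕ) < n := lt_of_le_of_ne (Nat.lt_succ_iff.mp i.isLt) hi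
        rw [if_neg hi, Nat.choose_eq_zero_of_lt hilt]
        simp
    · rw [Matrix.updateCol_ne hj, hBdef]
      have hj' : (j : ℕ) ≠ 0 := fun h => hj (Fin.ext h)
      simp [hj', hj]
  rw [hW, Matrix.det_updateCol_sum B 0 d]
  have hd0 : d 0 = F n := by simp [hddef]
  -- Now compute det B
  have hsign : ((Equiv.Perm.sign (finRotate (n + 1)) : ℤ) : ℝ) = (-1 : ℝ) ^ n := by
    rw [sign_finRotate]
    push_cast
    ring
  have hperm := Matrix.det_permute' (finRotate (n + 1)) B
  have htri : (B.submatrix id (finRotate (n + 1))).det = G 0 ^ (n + 1) := by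
    rw [Matrix.det_of_lowerTriangular]
    · have hdiag : ∀ i : Fin (n + 1), (B.submatrix id (finRotate (n + 1))) i i = G 0 := by
        intro i
        simp only [Matrix.submatrix_apply, id_eq, finRotate_succ_apply, hBdef, Matrix.of_apply]
        rcases eq_or_ne i (Fin.last n) with rfl | hi
        · have hv : ((Fin.last n + 1 : Fin (n + 1)) : ℕ) = 0 := by
            rw [Fin.val_add_one]
            simp
          rw [hv, if_pos rfl, Fin.val_last, if_pos rfl]
        · have hv : ((i + 1 : Fin (n + 1)) : ℕ) = (i : ℕ) + 1 := by
            rw [Fin.val_add_one, if_neg hi]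
          rw [hv]
          simp [Nat.choose_self]
      rw [Finset.prod_congr rfl (fun i _ => hdiag i)]
      simp
    · intro i j hij
      have hij' : i < j := hij
      simp only [Matrix.submatrix_apply, id_eq, finRotate_succ_apply, hBdef, Matrix.of_apply]
      rcases eq_or_ne j (Fin.last n) with rfl | hjn
      · have hv : ((Fin.last n + 1 : Fin (n + 1)) : ℕ) = 0 := by
          rw [Fin.val_add_one]; simp
        rw [hv, if_pos rfl, if_neg]
        have : (i : ℕ) < n := by
          have := hij'
          simpa [Fin.lt_def, Fin.val_last] using this
        omega
      · have hv : ((j + 1 : Fin (n + 1)) : ℕ) = (j : ℕ) + 1 := by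
          rw [Fin.val_add_one, if_neg hjn]
        rw [hv, if_neg (by omega), Nat.add_sub_cancel,
          Nat.choose_eq_zero_of_lt (by exact_mod_cast hij')]
        simp
  have hBdet : B.det = (-1 : ℝ) ^ n * G 0 ^ (n + 1) := by
    have key : ((-1 : ℝ) ^ n) * B.det = G 0 ^ (n + 1) := by
      calc ((-1 : ℝ) ^ n) * B.det
          = ((Equiv.Perm.sign (finRotate (n + 1)) : ℤ) : ℝ) * B.det := by rw [hsign]
        _ = (B.submatrix id (finRotate (n + 1))).det := by rw [hperm]
        _ = G 0 ^ (n + 1) := htri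
    have hsq : ((-1 : ℝ) ^ n) * ((-1 : ℝ) ^ n) = 1 := by
      rw [← pow_add]
      exact Even.neg_one_pow ⟨n, rfl⟩
    calc B.det = ((-1 : ℝ) ^ n * (-1 : ℝ) ^ n) * B.det := by rw [hsq, one_mul]
      _ = (-1 : ℝ) ^ n * (((-1 : ℝ) ^ n) * B.det) := by ring
      _ = (-1 : ℝ) ^ n * G 0 ^ (n + 1) := by rw [key]
  rw [hd0, hBdet, smul_eq_mul]
  ring

/-- The Bourbaki formula for the `n`-th derivative of a quotient: if `u` and `v` are
`n`-times differentiable on an open interval `(a, b)` and `v` does not vanish there,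
then for `t ∈ (a, b)`,
`(u/v)^{(n)}(t) = (-1)^n · det W(t) / v(t)^{n+1}`,
where `W(t)` is the `(n+1) × (n+1)` matrix (indexed from 0) whose column `0` has
entries `u^{(i)}(t)` and whose entry in row `i`, column `j ≥ 1` is
`C(i, j-1) · v^{(i+1-j)}(t)`, the entries with `j > i + 1` being `0` since the
binomial coefficient vanishes there. -/
theorem deriv_quotient_det (n : ℕ) (a b : ℝ) (u v : ℝ → ℝ)
    (hu : ContDiffOn ℝ n u (Ioo a b)) (hv : ContDiffOn ℝ n v (Ioo a b))
    (hv0 : ∀ t ∈ Ioo a b, v t ≠ 0) :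
    ∀ t ∈ Ioo a b,
      iteratedDerivWithin n (fun x => u x / v x) (Ioo a b) t =
        (-1 : ℝ) ^ n *
          (Matrix.det (Matrix.of fun i j : Fin (n + 1) =>
            if (j : ℕ) = 0 then iteratedDerivWithin (i : ℕ) u (Ioo a b) t
            else (Nat.choose (i : ℕ) ((j : ℕ) - 1) : ℝ) *
              iteratedDerivWithin ((i : ℕ) + 1 - (j : ℕ)) v (Ioo a b) t)) /
          (v t) ^ (n + 1) := by
  intro t ht
  have hud : UniqueDiffOn ℝ (Ioo a b) := (isOpen_Ioo (a := a) (b := b)).uniqueDiffOn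
  have hfc : ContDiffOn ℝ n (fun x => u x / v x) (Ioo a b) := hu.div hv hv0
  have hueq : ∀ i : ℕ, i ≤ n → iteratedDerivWithin i u (Ioo a b) t =
      ∑ m ∈ Finset.range (i + 1), (i.choose m : ℝ) *
        iteratedDerivWithin m (fun x => u x / v x) (Ioo a b) t *
        iteratedDerivWithin (i - m) v (Ioo a b) t := by
    intro i hi
    have hcongr : Set.EqOn u (fun x => (fun x => u x / v x) x * v x) (Ioo a b) := by
      intro x hx
      simp only
      rw [div_mul_cancel₀ _ (hv0 x hx)]
    have h1 : iteratedDerivWithin i u (Ioo a b) t =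
        iteratedDerivWithin i (fun x => (fun x => u x / v x) x * v x) (Ioo a b) t :=
      iteratedDerivWithin_congr hcongr ht
    rw [h1, leibniz_aux hud i _ v (hfc.of_le (by exact_mod_cast hi))
      (hv.of_le (by exact_mod_cast hi)) t ht]
  have hdet := det_aux n (fun m => iteratedDerivWithin m (fun x => u x / v x) (Ioo a b) t)
    (fun m => iteratedDerivWithin m v (Ioo a b) t)
  have hM : (Matrix.of fun i j : Fin (n + 1) =>
      if (j : ℕ) = 0 then iteratedDerivWithin (i : ℕ) u (Ioo a b) t
      else ((i : ℕ).choose ((j : ℕ) - 1) : ℝ) *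
        iteratedDerivWithin ((i : ℕ) + 1 - (j : ℕ)) v (Ioo a b) t)
      = Matrix.of fun i j : Fin (n + 1) =>
      if (j : ℕ) = 0 then
        ∑ m ∈ Finset.range ((i : ℕ) + 1), ((i : ℕ).choose m : ℝ) *
          iteratedDerivWithin m (fun x => u x / v x) (Ioo a b) t *
          iteratedDerivWithin ((i : ℕ) - m) v (Ioo a b) t
      else ((i : ℕ).choose ((j : ℕ) - 1) : ℝ) *
        iteratedDerivWithin ((i : ℕ) + 1 - (j : ℕ)) v (Ioo a b) t := by
    ext i j
    rcases eq_or_ne ((j : ℕ)) 0 with hj | hj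
    · simp only [Matrix.of_apply, if_pos hj]
      exact hueq i (Nat.lt_succ_iff.mp i.isLt)
    · simp only [Matrix.of_apply, if_neg hj]
  rw [hM, hdet]
  rw [iteratedDerivWithin_zero]
  have hsq : ((-1 : ℝ) ^ n) * ((-1 : ℝ) ^ n) = 1 := by
    rw [← pow_add]
    exact Even.neg_one_pow ⟨n, rfl⟩
  rw [eq_div_iff (pow_ne_zero (n + 1) (hv0 t ht))]
  linear_combination (-(iteratedDerivWithin n (fun x => u x / v x) (Ioo a b) t) *
    v t ^ (n + 1)) * hsq
end

section
/- For all integers p, q ≥ 0, the Delannoy number D(p,q) equals (1/(p!·q!)) times the mixed partial derivative ∂^{p+q}/∂y^q ∂x^p of the function (x,y) ↦ 1/(1 - x - y - xy), evaluated at (x,y) = (0,0). -/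
open Finset

lemma hasDerivAt_invpow (a b : ℝ) (k : ℕ) (x : ℝ) (h : a - b * x ≠ 0) :
    HasDerivAt (fun x : ℝ => ((a - b * x)⁻¹) ^ (k + 1))
      (((k : ℝ) + 1) * b * ((a - b * x)⁻¹) ^ (k + 2)) x := by
  have h1 : HasDerivAt (fun x : ℝ => a - b * x) (-b) x := by
    simpa using ((hasDerivAt_id x).const_mul b).const_sub a
  have h3 := (h1.inv h).pow (k + 1)
  refine h3.congr_deriv ?_
  rw [neg_neg, div_eq_mul_inv, ← inv_pow]
  push_cast
  simp only [Pi.inv_apply]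
  ring

lemma iter_invpow (a b : ℝ) (m : ℕ) : ∀ (n : ℕ) (x : ℝ), a - b * x ≠ 0 →
    iteratedDeriv n (fun x : ℝ => ((a - b * x)⁻¹) ^ (m + 1)) x
      = (((m + n).factorial : ℝ) / (m.factorial : ℝ)) * b ^ n * ((a - b * x)⁻¹) ^ (m + n + 1) := by
  intro n
  induction n with
  | zero => intro x hx; rw [iteratedDeriv_zero]; field_simp; simp
  | succ n ih =>
    intro x hx
    have hopen : IsOpen {x : ℝ | a - b * x ≠ 0} :=
      isOpen_ne.preimage (by fun_prop)
    have hev : iteratedDeriv n (fun x : ℝ => ((a - b * x)⁻¹) ^ (m + 1)) =ᶠ[nhds x]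
        fun x => (((m + n).factorial : ℝ) / (m.factorial : ℝ)) * b ^ n * ((a - b * x)⁻¹) ^ (m + n + 1) := by
      filter_upwards [hopen.mem_nhds hx] with y hy
      exact ih y hy
    rw [iteratedDeriv_succ, hev.deriv_eq]
    have hd := (hasDerivAt_invpow a b (m + n) x hx).const_mul
      (((m + n).factorial : ℝ) / (m.factorial : ℝ) * b ^ n)
    rw [show (fun x : ℝ => (((m + n).factorial : ℝ) / (m.factorial : ℝ)) * b ^ n * ((a - b * x)⁻¹) ^ (m + n + 1)) = fun x : ℝ => (((m + n).factorial : ℝ) / (m.factorial : ℝ) * b ^ n) * ((a - b * x)⁻¹) ^ (m + n + 1) from rfl, hd.deriv]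
    have : ((m + (n+1)).factorial : ℝ) = ((m+n).factorial : ℝ) * ((m:ℝ) + n + 1) := by
      rw [show m + (n+1) = (m+n) + 1 by ring, Nat.factorial_succ]
      push_cast; ring
    rw [this]
    have h2 : m + (n + 1) + 1 = m + n + 2 := by ring
    rw [h2]
    push_cast
    ring

lemma iter_sum (P : ℕ) (c : ℕ → ℝ) : ∀ (n : ℕ) (x : ℝ), 1 - x ≠ 0 →
    iteratedDeriv n (fun y : ℝ => ∑ i ∈ range P, c i * ((1 - y)⁻¹) ^ (i + 1)) x
      = ∑ i ∈ range P, c i * (((i + n).factorial : ℝ) / (i.factorial : ℝ)) * ((1 - x)⁻¹) ^ (i + n + 1) := by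
  intro n
  induction n with
  | zero =>
    intro x hx
    rw [iteratedDeriv_zero]
    refine Finset.sum_congr rfl fun i _ => ?_
    rw [show ((i + 0).factorial : ℝ) = (i.factorial : ℝ) by norm_num,
      div_self (by positivity : ((i.factorial : ℝ)) ≠ 0)]
    ring
  | succ n ih =>
    intro x hx
    have hopen : IsOpen {x : ℝ | 1 - x ≠ 0} := isOpen_ne.preimage (by fun_prop)
    have hev : iteratedDeriv n (fun y : ℝ => ∑ i ∈ range P, c i * ((1 - y)⁻¹) ^ (i + 1)) =ᶠ[nhds x]
        fun y => ∑ i ∈ range P, c i * (((i + n).factorial : ℝ) / (i.factorial : ℝ)) * ((1 - y)⁻¹) ^ (i + n + 1) := by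
      filter_upwards [hopen.mem_nhds hx] with y hy
      exact ih y hy
    rw [iteratedDeriv_succ, hev.deriv_eq]
    have hterm : ∀ i, HasDerivAt
        (fun y : ℝ => c i * (((i + n).factorial : ℝ) / (i.factorial : ℝ)) * ((1 - y)⁻¹) ^ (i + n + 1))
        (c i * (((i + n).factorial : ℝ) / (i.factorial : ℝ)) * (((i + n : ℕ) : ℝ) + 1) * ((1 - x)⁻¹) ^ (i + n + 2)) x := by
      intro i
      have := (hasDerivAt_invpow 1 1 (i + n) x (by simpa using hx)).const_mul
        (c i * (((i + n).factorial : ℝ) / (i.factorial : ℝ)))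
      simp only [one_mul] at this
      refine this.congr_deriv ?_
      ring
    have hsum : HasDerivAt (fun y : ℝ => ∑ i ∈ range P, c i * (((i + n).factorial : ℝ) / (i.factorial : ℝ)) * ((1 - y)⁻¹) ^ (i + n + 1)) (∑ i ∈ range P, c i * (((i + n).factorial : ℝ) / (i.factorial : ℝ)) * (((i + n : ℕ) : ℝ) + 1) * ((1 - x)⁻¹) ^ (i + n + 2)) x := HasDerivAt.fun_sum (fun i _ => hterm i)
    rw [hsum.deriv]
    refine Finset.sum_congr rfl fun i _ => ?_
    have : ((i + (n+1)).factorial : ℝ) = ((i+n).factorial : ℝ) * ((i:ℝ) + n + 1) := by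
      rw [show i + (n+1) = (i+n) + 1 by ring, Nat.factorial_succ]
      push_cast; ring
    rw [this, show i + (n + 1) + 1 = i + n + 2 by ring]
    push_cast
    ring

lemma vandermonde_sym (q i : ℕ) :
    (i + q).choose q = ∑ k ∈ range (i + 1), i.choose k * q.choose k := by
  have h1 : (i + q).choose q = (i + q).choose i := (Nat.choose_symm_add).symm
  rw [h1, Nat.add_choose_eq, Finset.Nat.sum_antidiagonal_eq_sum_range_succ_mk]
  rw [← Finset.sum_range_reflect]
  refine Finset.sum_congr rfl fun k hk => ?_
  rw [mem_range, Nat.lt_succ_iff] at hk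
  have e1 : i + 1 - 1 - k = i - k := by omega
  rw [e1]
  congr 1
  · exact Nat.choose_symm hk
  · congr 1; omega

lemma inner_B (p k : ℕ) (hk : k ≤ p) :
    ∑ i ∈ range (p + 1), (p.choose i : ℝ) * (i.choose k : ℝ) * (-1 : ℝ) ^ (p - i) * 2 ^ i
      = (p.choose k : ℝ) * 2 ^ k := by
  have hsub : Finset.Ico k (p + 1) ⊆ range (p + 1) := by
    intro x hx; rw [mem_range]; exact (Finset.mem_Ico.mp hx).2
  rw [← Finset.sum_subset hsub (fun x hx hx' => by
    have : x < k := by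
      rw [mem_range] at hx; rw [Finset.mem_Ico] at hx'; omega
    rw [Nat.choose_eq_zero_of_lt this]; simp)]
  rw [Finset.sum_Ico_eq_sum_range]
  have hpk : p + 1 - k = (p - k) + 1 := by omega
  rw [hpk]
  have hstep : ∀ m ∈ range (p - k + 1),
      (p.choose (k + m) : ℝ) * ((k + m).choose k : ℝ) * (-1 : ℝ) ^ (p - (k + m)) * 2 ^ (k + m)
        = (p.choose k : ℝ) * 2 ^ k * (((p - k).choose m : ℝ) * 2 ^ m * (-1 : ℝ) ^ ((p - k) - m)) := by
    intro m hm
    rw [mem_range, Nat.lt_succ_iff] at hm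
    have hc : p.choose (k + m) * (k + m).choose k = p.choose k * (p - k).choose m := by
      have := Nat.choose_mul (n := p) (show k ≤ k + m by omega)
      simpa [Nat.add_sub_cancel_left] using this
    have hcast : (p.choose (k + m) : ℝ) * ((k + m).choose k : ℝ) = (p.choose k : ℝ) * ((p - k).choose m : ℝ) := by
      exact_mod_cast congrArg (Nat.cast (R := ℝ)) hc
    have he : p - (k + m) = (p - k) - m := by omega
    rw [he]
    calc (p.choose (k + m) : ℝ) * ((k + m).choose k : ℝ) * (-1 : ℝ) ^ (p - k - m) * 2 ^ (k + m)
        = (p.choose (k + m) : ℝ) * ((k + m).choose k : ℝ) * ((-1 : ℝ) ^ (p - k - m) * 2 ^ (k + m)) := by ring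
      _ = (p.choose k : ℝ) * ((p - k).choose m : ℝ) * ((-1 : ℝ) ^ (p - k - m) * 2 ^ (k + m)) := by rw [hcast]
      _ = _ := by rw [pow_add]; ring
  rw [Finset.sum_congr rfl hstep, ← Finset.mul_sum]
  have hbin : ∑ m ∈ range (p - k + 1), ((p - k).choose m : ℝ) * 2 ^ m * (-1 : ℝ) ^ ((p - k) - m) = 1 := by
    have := add_pow (2 : ℝ) (-1) (p - k)
    norm_num at this
    refine Eq.trans ?_ this.symm
    exact Finset.sum_congr rfl fun m _ => by ring
  rw [hbin, mul_one]

lemma key_identity (p q : ℕ) :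
    ∑ i ∈ range (p + 1), (p.choose i : ℝ) * 2 ^ i * (-1 : ℝ) ^ (p - i) * ((i + q).choose q : ℝ)
      = ∑ i ∈ range (p + 1), (p.choose i : ℝ) * (q.choose i : ℝ) * 2 ^ i := by
  have hA : ∀ i ∈ range (p + 1), ((i + q).choose q : ℝ)
      = ∑ k ∈ range (p + 1), (i.choose k : ℝ) * (q.choose k : ℝ) := by
    intro i hi
    rw [mem_range, Nat.lt_succ_iff] at hi
    have hext : (∑ k ∈ range (i + 1), i.choose k * q.choose k)
        = ∑ k ∈ range (p + 1), i.choose k * q.choose k :=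
      Finset.sum_subset (Finset.range_subset_range.mpr (by omega)) (fun x hx hx' => by
        rw [Nat.choose_eq_zero_of_lt (by rw [mem_range] at hx hx'; omega), zero_mul])
    rw [vandermonde_sym, hext]
    push_cast
    rfl
  rw [Finset.sum_congr rfl (fun i hi => by rw [hA i hi])]
  simp only [Finset.mul_sum]
  rw [Finset.sum_comm]
  refine Finset.sum_congr rfl fun k hk => ?_
  rw [mem_range, Nat.lt_succ_iff] at hk
  have := inner_B p k hk
  calc ∑ i ∈ range (p + 1), (p.choose i : ℝ) * 2 ^ i * (-1 : ℝ) ^ (p - i) * ((i.choose k : ℝ) * (q.choose k : ℝ))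
      = (∑ i ∈ range (p + 1), (p.choose i : ℝ) * (i.choose k : ℝ) * (-1 : ℝ) ^ (p - i) * 2 ^ i) * (q.choose k : ℝ) := by
        rw [Finset.sum_mul]; exact Finset.sum_congr rfl fun i _ => by ring
    _ = (p.choose k : ℝ) * 2 ^ k * (q.choose k : ℝ) := by rw [this]
    _ = (p.choose k : ℝ) * (q.choose k : ℝ) * 2 ^ k := by ring



/-- `D(p,q)` equals `1/(p! q!)` times the mixed partial derivative
`∂^{p+q}/∂y^q ∂x^p` of `(x,y) ↦ 1/(1 - x - y - xy)` at the origin: first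
differentiate `p` times in `x` (with `y` fixed), then `q` times in `y` (with
`x` fixed at `0`), and evaluate at `y = 0`. -/
theorem delannoy_eq_mixed_partial (p q : ℕ) :
    (delannoy p q : ℝ) =
      (1 / ((p.factorial : ℝ) * (q.factorial : ℝ))) *
        iteratedDeriv q
          (fun y : ℝ => iteratedDeriv p (fun x : ℝ => 1 / (1 - x - y - x * y)) 0) 0 := by
  set c : ℕ → ℝ := fun i =>
    (p.factorial : ℝ) * (p.choose i : ℝ) * 2 ^ i * (-1 : ℝ) ^ (p - i) with hc
  -- Step 1: the inner iterated derivative agrees with an explicit sum near y = 0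
  have hopen : IsOpen {y : ℝ | 1 - y ≠ 0} := isOpen_ne.preimage (by fun_prop)
  have hstep1 : (fun y : ℝ => iteratedDeriv p (fun x : ℝ => 1 / (1 - x - y - x * y)) 0)
      =ᶠ[nhds 0] fun y : ℝ => ∑ i ∈ range (p + 1), c i * ((1 - y)⁻¹) ^ (i + 1) := by
    filter_upwards [hopen.mem_nhds (by norm_num : (0:ℝ) ∈ {y : ℝ | 1 - y ≠ 0})] with y hy
    have hy' : (1 : ℝ) - y ≠ 0 := hy
    have hfun : (fun x : ℝ => 1 / (1 - x - y - x * y))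
        = fun x : ℝ => (((1 - y) - (1 + y) * x)⁻¹) ^ (0 + 1) := by
      funext x
      rw [zero_add, pow_one, one_div]
      congr 1
      ring
    have h0 : (1 - y) - (1 + y) * (0:ℝ) ≠ 0 := by simpa using hy'
    rw [hfun, iter_invpow (1 - y) (1 + y) 0 p 0 h0]
    have hu : ((1 - y) - (1 + y) * (0:ℝ))⁻¹ = (1 - y)⁻¹ := by norm_num
    rw [hu]
    simp only [Nat.zero_add, Nat.factorial_zero, Nat.cast_one, div_one]
    -- now: p! * (1+y)^p * ((1-y)⁻¹)^(p+1) = ∑ c i * ((1-y)⁻¹)^(i+1)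
    have hpow : ((1:ℝ) + y) ^ p
        = ∑ i ∈ range (p + 1), 2 ^ i * (y - 1) ^ (p - i) * (p.choose i : ℝ) := by
      have := add_pow (2 : ℝ) (y - 1) p
      rw [show (2 : ℝ) + (y - 1) = 1 + y by ring] at this
      exact this
    rw [hpow, Finset.mul_sum, Finset.sum_mul]
    refine Finset.sum_congr rfl fun i hi => ?_
    rw [mem_range, Nat.lt_succ_iff] at hi
    have hsplit : ((1 - y)⁻¹) ^ (p + 1) = ((1 - y)⁻¹) ^ (p - i) * ((1 - y)⁻¹) ^ (i + 1) := by
      rw [← pow_add]; congr 1; omega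
    have hneg : (y - 1) ^ (p - i) = (-1 : ℝ) ^ (p - i) * (1 - y) ^ (p - i) := by
      rw [← neg_one_mul, ← mul_pow]; congr 1; ring
    have hcancel : (1 - y) ^ (p - i) * ((1 - y)⁻¹) ^ (p - i) = 1 := by
      rw [← mul_pow, mul_inv_cancel₀ hy', one_pow]
    calc (p.factorial : ℝ) * (2 ^ i * (y - 1) ^ (p - i) * (p.choose i : ℝ)) * ((1 - y)⁻¹) ^ (p + 1)
        = c i * ((1 - y) ^ (p - i) * ((1 - y)⁻¹) ^ (p - i)) * ((1 - y)⁻¹) ^ (i + 1) := by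
          rw [hsplit, hneg, hc]; ring
      _ = c i * ((1 - y)⁻¹) ^ (i + 1) := by rw [hcancel]; ring
  rw [hstep1.iteratedDeriv_eq q]
  rw [iter_sum (p + 1) c q 0 (by norm_num)]
  have hval : ∀ i ∈ range (p + 1),
      c i * (((i + q).factorial : ℝ) / (i.factorial : ℝ)) * ((1 - (0:ℝ))⁻¹) ^ (i + q + 1)
        = c i * (((i + q).choose q : ℝ) * (q.factorial : ℝ)) := by
    intro i _
    have h := Nat.add_choose_mul_factorial_mul_factorial i q
    have hcast : ((i + q).choose q : ℝ) * (i.factorial : ℝ) * (q.factorial : ℝ)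
        = ((i + q).factorial : ℝ) := by exact_mod_cast congrArg (Nat.cast (R := ℝ)) h
    have hi0 : (i.factorial : ℝ) ≠ 0 := by positivity
    rw [show ((1 - (0:ℝ))⁻¹) = 1 by norm_num, one_pow, mul_one]
    congr 1
    rw [eq_comm, ← hcast]
    field_simp
  rw [Finset.sum_congr rfl hval]
  have hp0 : (p.factorial : ℝ) ≠ 0 := by positivity
  have hq0 : (q.factorial : ℝ) ≠ 0 := by positivity
  have hfinal : (1 / ((p.factorial : ℝ) * (q.factorial : ℝ))) *
      ∑ i ∈ range (p + 1), c i * (((i + q).choose q : ℝ) * (q.factorial : ℝ))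
      = ∑ i ∈ range (p + 1), (p.choose i : ℝ) * 2 ^ i * (-1 : ℝ) ^ (p - i) * ((i + q).choose q : ℝ) := by
    rw [Finset.mul_sum]
    refine Finset.sum_congr rfl fun i _ => ?_
    rw [hc]
    field_simp
  rw [hfinal, key_identity]
  rw [delannoy]
  push_cast
  rfl
end

section
/- For all integers p, q ≥ 0, the two explicit formulas for the Delannoy numbers agree: ∑_{i=0}^{p} C(p,i)·C(q,i)·2^i = ∑_{i=0}^{q} C(q,i)·C(p+q-i, q). -/
open Finset

/-- Trinomial revision, valid for all naturals. -/
lemma tri_rev (q j k : ℕ) :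
    q.choose (j + k) * (j + k).choose j = q.choose j * (q - j).choose k := by
  by_cases h : j + k ≤ q
  · have := Nat.choose_mul (n := q) (k := j + k) (s := j) (Nat.le_add_right _ _)
    simpa using this
  · push_neg at h
    rw [Nat.choose_eq_zero_of_lt h, Nat.zero_mul]
    rcases le_or_gt j q with hjq | hjq
    · rw [Nat.choose_eq_zero_of_lt (by omega : q - j < k), Nat.mul_zero]
    · rw [Nat.choose_eq_zero_of_lt hjq, Nat.zero_mul]

lemma delannoy_inner (p q j : ℕ) (hj : j ≤ p) (hjq : j ≤ q) :
    ∑ i ∈ range (p + 1), p.choose i * (q.choose i * i.choose j)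
      = q.choose j * (p + q - j).choose q := by
  have hsub : Finset.Ico j (p + 1) ⊆ range (p + 1) := by
    intro x hx; simp only [Finset.mem_Ico] at hx; simp [hx.2]
  rw [← Finset.sum_subset hsub (by
    intro x hx hx'
    simp only [Finset.mem_range] at hx
    simp only [Finset.mem_Ico, not_and, not_lt] at hx'
    have : x < j := by omega
    rw [Nat.choose_eq_zero_of_lt this]; ring)]
  rw [Finset.sum_Ico_eq_sum_range]
  have hrange : p + 1 - j = (p - j) + 1 := by omega
  rw [hrange]
  have step : ∀ k ∈ range (p - j + 1),
      p.choose (j + k) * (q.choose (j + k) * (j + k).choose j)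
        = q.choose j * ((q - j).choose k * p.choose ((p - j) - k)) := by
    intro k hk
    simp only [Finset.mem_range] at hk
    rw [tri_rev]
    have hkp : j + k ≤ p := by omega
    have : p.choose (j + k) = p.choose ((p - j) - k) := by
      rw [← Nat.choose_symm hkp]
      congr 1
      omega
    rw [this]; ring
  rw [Finset.sum_congr rfl step, ← Finset.mul_sum]
  congr 1
  have := Nat.add_choose_eq (q - j) p (p - j)
  rw [Nat.sum_antidiagonal_eq_sum_range_succ_mk] at this
  rw [← this]
  have h1 : q - j + p = p + q - j := by omega
  have h2 : q ≤ p + q - j := by omega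
  rw [h1, ← Nat.choose_symm h2]
  congr 1
  omega

/-- The two explicit formulas for the Delannoy numbers agree:
`∑_{i=0}^{p} C(p,i) C(q,i) 2^i = ∑_{i=0}^{q} C(q,i) C(p+q-i, q)`. -/
theorem delannoy_two_formulas (p q : ℕ) :
    ∑ i ∈ Finset.range (p + 1), p.choose i * q.choose i * 2 ^ i =
      ∑ i ∈ Finset.range (q + 1), q.choose i * (p + q - i).choose q := by
  have L1 : ∑ i ∈ Finset.range (p + 1), p.choose i * q.choose i * 2 ^ i
      = ∑ i ∈ range (p + 1), ∑ j ∈ range (p + 1),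
          p.choose i * (q.choose i * i.choose j) := by
    simp_rw [mul_assoc]
    refine Finset.sum_congr rfl fun i hi => ?_
    simp only [Finset.mem_range] at hi
    rw [← Nat.sum_range_choose i, Finset.mul_sum, Finset.mul_sum]
    refine Finset.sum_subset (by intro x hx; simp only [Finset.mem_range] at *; omega) ?_
    intro x hx hx'
    simp only [Finset.mem_range, not_lt] at hx'
    rw [Nat.choose_eq_zero_of_lt (by omega : i < x)]
    ring
  rw [L1, Finset.sum_comm]
  have L2 : ∑ j ∈ range (p + 1), ∑ i ∈ range (p + 1),
      p.choose i * (q.choose i * i.choose j)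
      = ∑ j ∈ range (p + 1), q.choose j * (p + q - j).choose q := by
    refine Finset.sum_congr rfl fun j hj => ?_
    simp only [Finset.mem_range] at hj
    rcases le_or_gt j q with hjq | hjq
    · exact delannoy_inner p q j (by omega) hjq
    · rw [Nat.choose_eq_zero_of_lt hjq, Nat.zero_mul]
      refine Finset.sum_eq_zero fun i hi => ?_
      rcases le_or_gt i q with hiq | hiq
      · rw [Nat.choose_eq_zero_of_lt (by omega : i < j)]; ring
      · rw [Nat.choose_eq_zero_of_lt hiq]; ring
  rw [L2]
  -- extend both sides to range (p + q + 1)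
  have h1 : ∑ j ∈ range (p + 1), q.choose j * (p + q - j).choose q
      = ∑ j ∈ range (p + q + 1), q.choose j * (p + q - j).choose q := by
    refine Finset.sum_subset (by intro x hx; simp only [Finset.mem_range] at *; omega) ?_
    intro x hx hx'
    simp only [Finset.mem_range, not_lt] at hx hx'
    rw [Nat.choose_eq_zero_of_lt (by omega : p + q - x < q)]
    ring
  have h2 : ∑ j ∈ range (q + 1), q.choose j * (p + q - j).choose q
      = ∑ j ∈ range (p + q + 1), q.choose j * (p + q - j).choose q := by
    refine Finset.sum_subset (by intro x hx; simp only [Finset.mem_range] at *; omega) ?_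
    intro x hx hx'
    simp only [Finset.mem_range, not_lt] at hx hx'
    rw [Nat.choose_eq_zero_of_lt (by omega : q < x)]
    ring
  rw [h1, h2]
end
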